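/- arXiv:2205.03551 — 3 statements merged into one kernel-verified Lean document; each statement's English description precedes it below -/
import Mathlib

section
/- Let β, τ be positive reals with τ > β. Then for every integer w ≥ 2, ∑_{v=1}^{w−1} (τ + βv)^{−2}·(τ + β(w−v))^{−2} ≤ 8/(β·τ·(τ + βw)²). -/
open Finset

private lemma tail_sum_bound (β τ : ℝ) (hβ : 0 < β) (hτ : β < τ) (n : ℕ) :
    ∑ v ∈ Finset.Icc 1 n, ((τ + β * v) ^ 2)⁻¹ ≤ 1 / (β * τ) := by
  have hτ0 : 0 < τ := hβ.trans hτ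
  have key : ∀ i : ℕ, ((τ + β * ((1 + i : ℕ) : ℝ)) ^ 2)⁻¹ ≤
      (β * (τ + β * i))⁻¹ - (β * (τ + β * ((i + 1 : ℕ) : ℝ)))⁻¹ := by
    intro i
    push_cast
    have h1 : (0:ℝ) < τ + β * i := by positivity
    have h2 : (0:ℝ) < τ + β * ((i : ℝ) + 1) := by positivity
    have heq : (β * (τ + β * i))⁻¹ - (β * (τ + β * ((i:ℝ) + 1)))⁻¹
        = ((τ + β * i) * (τ + β * ((i:ℝ) + 1)))⁻¹ := by
      field_simp
      ring
    rw [heq]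
    have h3 : ((1:ℝ) + i) = ((i:ℝ) + 1) := by ring
    rw [h3]
    apply inv_anti₀ (by positivity)
    nlinarith [hβ.le, h2.le]
  calc ∑ v ∈ Finset.Icc 1 n, ((τ + β * v) ^ 2)⁻¹
      = ∑ i ∈ Finset.range n, ((τ + β * ((1 + i : ℕ) : ℝ)) ^ 2)⁻¹ := by
        rw [← Finset.Ico_add_one_right_eq_Icc, Finset.sum_Ico_eq_sum_range]
        simp
    _ ≤ ∑ i ∈ Finset.range n, ((β * (τ + β * i))⁻¹ - (β * (τ + β * ((i + 1 : ℕ) : ℝ)))⁻¹) :=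
        Finset.sum_le_sum fun i _ => key i
    _ = (β * (τ + β * ((0:ℕ):ℝ)))⁻¹ - (β * (τ + β * n))⁻¹ :=
        Finset.sum_range_sub' (fun i => (β * (τ + β * ((i:ℕ):ℝ)))⁻¹) n
    _ ≤ 1 / (β * τ) := by
        have h3 : (0:ℝ) ≤ (β * (τ + β * n))⁻¹ := by positivity
        simp only [Nat.cast_zero, mul_zero, add_zero, one_div]
        linarith

/-- Convolution bound: for positive reals `τ > β > 0` and integer `w ≥ 2`,
`∑_{v=1}^{w−1} (τ+βv)⁻²·(τ+β(w−v))⁻² ≤ 8/(βτ(τ+βw)²)`. -/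
theorem convolution_sum_bound (β τ : ℝ) (hβ : 0 < β) (hτ : β < τ) (w : ℕ) (hw : 2 ≤ w) :
    ∑ v ∈ Finset.Icc 1 (w - 1),
        ((τ + β * v) ^ 2)⁻¹ * ((τ + β * (w - v : ℕ)) ^ 2)⁻¹ ≤
      8 / (β * τ * (τ + β * w) ^ 2) := by
  have hτ0 : 0 < τ := hβ.trans hτ
  have hS : (0:ℝ) < τ + β * w := by positivity
  -- termwise bound
  have term : ∀ v ∈ Finset.Icc 1 (w - 1),
      ((τ + β * v) ^ 2)⁻¹ * ((τ + β * (w - v : ℕ)) ^ 2)⁻¹ ≤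
        4 / (τ + β * w) ^ 2 * (((τ + β * v) ^ 2)⁻¹ + ((τ + β * (w - v : ℕ)) ^ 2)⁻¹) := by
    intro v hv
    rw [Finset.mem_Icc] at hv
    have hvw : v ≤ w := by omega
    have hcast : ((w - v : ℕ) : ℝ) = (w : ℝ) - v := Nat.cast_sub hvw
    set a := τ + β * (v:ℝ) with ha_def
    set b := τ + β * ((w - v : ℕ) : ℝ) with hb_def
    have ha : 0 < a := by positivity
    have hb : 0 < b := by rw [hb_def]; positivity
    have hab : τ + β * w ≤ a + b := by
      rw [ha_def, hb_def, hcast]; nlinarith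
    have hsq : (τ + β * w) ^ 2 ≤ (a + b) ^ 2 := pow_le_pow_left₀ hS.le hab 2
    have key : (τ + β * w) ^ 2 ≤ 4 * (a ^ 2 + b ^ 2) := by nlinarith [sq_nonneg (a - b)]
    rw [div_mul_eq_mul_div, le_div_iff₀ (by positivity)]
    have e : (a ^ 2)⁻¹ * (b ^ 2)⁻¹ * (τ + β * w) ^ 2 * (a ^ 2 * b ^ 2)
        = (τ + β * w) ^ 2 := by field_simp
    have e2 : 4 * ((a ^ 2)⁻¹ + (b ^ 2)⁻¹) * (a ^ 2 * b ^ 2) = 4 * (b ^ 2 + a ^ 2) := by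
      field_simp
    have h4 : (a ^ 2)⁻¹ * (b ^ 2)⁻¹ * (τ + β * w) ^ 2 * (a ^ 2 * b ^ 2)
        ≤ 4 * ((a ^ 2)⁻¹ + (b ^ 2)⁻¹) * (a ^ 2 * b ^ 2) := by
      rw [e, e2]; linarith
    exact le_of_mul_le_mul_right h4 (by positivity)
  -- symmetry
  have sym : ∑ v ∈ Finset.Icc 1 (w - 1), ((τ + β * ((w - v : ℕ):ℝ)) ^ 2)⁻¹
      = ∑ v ∈ Finset.Icc 1 (w - 1), ((τ + β * (v:ℝ)) ^ 2)⁻¹ := by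
    refine Finset.sum_nbij' (i := fun v => w - v) (j := fun v => w - v) ?_ ?_ ?_ ?_ ?_
    · intro v hv; simp only [Finset.mem_Icc] at *; omega
    · intro v hv; simp only [Finset.mem_Icc] at *; omega
    · intro v hv; simp only [Finset.mem_Icc] at hv; show w - (w - v) = v; omega
    · intro v hv; simp only [Finset.mem_Icc] at hv; show w - (w - v) = v; omega
    · intro v hv; rfl
  calc ∑ v ∈ Finset.Icc 1 (w - 1),
        ((τ + β * v) ^ 2)⁻¹ * ((τ + β * (w - v : ℕ)) ^ 2)⁻¹
      ≤ ∑ v ∈ Finset.Icc 1 (w - 1),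
        4 / (τ + β * w) ^ 2 * (((τ + β * v) ^ 2)⁻¹ + ((τ + β * (w - v : ℕ)) ^ 2)⁻¹) :=
        Finset.sum_le_sum term
    _ = 4 / (τ + β * w) ^ 2 * (∑ v ∈ Finset.Icc 1 (w - 1), ((τ + β * v) ^ 2)⁻¹
          + ∑ v ∈ Finset.Icc 1 (w - 1), ((τ + β * ((w - v : ℕ):ℝ)) ^ 2)⁻¹) := by
        rw [← Finset.mul_sum, ← Finset.sum_add_distrib]
    _ = 8 / (τ + β * w) ^ 2 * ∑ v ∈ Finset.Icc 1 (w - 1), ((τ + β * v) ^ 2)⁻¹ := by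
        rw [sym]; ring
    _ ≤ 8 / (τ + β * w) ^ 2 * (1 / (β * τ)) :=
        mul_le_mul_of_nonneg_left (tail_sum_bound β τ hβ hτ _) (by positivity)
    _ = 8 / (β * τ * (τ + β * w) ^ 2) := by
        rw [div_mul_div_comm]; ring_nf
end

section
/- Let Y be a Poisson random variable with mean 1/2, independent of an i.i.d. sequence η_1, η_2, … of Exp(λM) random variables, where λM ≥ 8. Then P(∑_{i=1}^Y η_i ≥ 1/4) ≤ 2·exp(−λM/32). -/
open MeasureTheory ProbabilityTheory Real Finset
open scoped NNReal ENNReal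

/-- MGF of the exponential distribution with rate `c`, evaluated at `c / 2`, equals `2`. -/
lemma exp_lintegral_expMeasure_half {c : ℝ} (hc : 0 < c) :
    ∫⁻ x, ENNReal.ofReal (Real.exp (c / 2 * x)) ∂(expMeasure c) = ENNReal.ofReal 2 := by
  have hmeq : expMeasure c = MeasureTheory.volume.withDensity (exponentialPDF c) := rfl
  have hgmeas : Measurable fun x : ℝ => ENNReal.ofReal (Real.exp (c / 2 * x)) :=
    ENNReal.measurable_ofReal.comp (Real.measurable_exp.comp (measurable_const_mul _))
  have hpdfm : Measurable (exponentialPDF c) :=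
    (measurable_exponentialPDFReal c).ennreal_ofReal
  rw [hmeq, lintegral_withDensity_eq_lintegral_mul _ hpdfm hgmeas]
  have h0 : MeasurableSet (Set.Ici (0 : ℝ)) := measurableSet_Ici
  rw [← lintegral_add_compl _ h0]
  have hIio : ∫⁻ x in (Set.Ici (0 : ℝ))ᶜ,
      (exponentialPDF c * fun x => ENNReal.ofReal (Real.exp (c / 2 * x))) x = 0 := by
    rw [Set.compl_Ici]
    refine (setLIntegral_congr_fun measurableSet_Iio
      (fun x hx => ?_)).trans lintegral_zero
    simp [Pi.mul_apply, exponentialPDF_of_neg (Set.mem_Iio.mp hx)]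
  have hIci : ∫⁻ x in Set.Ici (0 : ℝ),
      (exponentialPDF c * fun x => ENNReal.ofReal (Real.exp (c / 2 * x))) x
      = ENNReal.ofReal 2 := by
    have hcong : ∫⁻ x in Set.Ici (0 : ℝ),
        (exponentialPDF c * fun x => ENNReal.ofReal (Real.exp (c / 2 * x))) x
        = ∫⁻ x in Set.Ici (0 : ℝ), ENNReal.ofReal (c * Real.exp (-(c / 2 * x))) := by
      refine setLIntegral_congr_fun measurableSet_Ici (fun x hx => ?_)
      rw [Pi.mul_apply, exponentialPDF_of_nonneg hx,
        ← ENNReal.ofReal_mul (by positivity)]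
      congr 1
      rw [mul_assoc, ← Real.exp_add]
      congr 2
      ring
    rw [hcong, ← MeasureTheory.restrict_Ioi_eq_restrict_Ici]
    have hint : IntegrableOn (fun x => c * Real.exp (-(c / 2 * x))) (Set.Ioi (0 : ℝ)) := by
      have := (exp_neg_integrableOn_Ioi 0 (half_pos hc)).const_mul c
      rw [IntegrableOn]; simpa [neg_mul] using this
    rw [← ofReal_integral_eq_lintegral_ofReal hint (ae_of_all _ fun x => by positivity)]
    congr 1
    have hI : ∫ x in Set.Ioi (0 : ℝ), Real.exp (-(c / 2 * x)) = (c / 2)⁻¹ := by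
      have := integral_comp_mul_left_Ioi (fun x => Real.exp (-x)) 0 (half_pos hc)
      simp only [mul_zero, integral_exp_neg_Ioi_zero, smul_eq_mul, mul_one] at this
      exact this
    rw [MeasureTheory.integral_const_mul, hI]
    field_simp
  rw [hIio, hIci, add_zero]

/-- Probability generating function of `Pois(1/2)` at `2`: `E[2^Y] = exp(1/2)`. -/
lemma poisson_pgf_half :
    ∑' n : ℕ, (poissonPMF (1 / 2 : ℝ≥0) n) * (ENNReal.ofReal 2) ^ n
      = ENNReal.ofReal (Real.exp (1 / 2)) := by
  have hsummable : Summable fun n : ℕ => Real.exp (-(1 / 2)) * ((1 : ℝ) / (Nat.factorial n : ℝ)) := by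
    have := Real.summable_pow_div_factorial 1
    simp only [one_pow] at this
    exact this.mul_left _
  calc ∑' n : ℕ, (poissonPMF (1 / 2 : ℝ≥0) n) * (ENNReal.ofReal 2) ^ n
      = ∑' n : ℕ, ENNReal.ofReal (Real.exp (-(1 / 2)) * ((1 : ℝ) / (Nat.factorial n : ℝ))) := by
        refine tsum_congr fun n => ?_
        have h1 : (poissonPMF (1 / 2 : ℝ≥0) n) = ENNReal.ofReal (poissonPMFReal (1 / 2) n) := rfl
        rw [h1, ← ENNReal.ofReal_pow (by norm_num : (0:ℝ) ≤ 2),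
          ← ENNReal.ofReal_mul poissonPMFReal_nonneg]
        congr 1
        rw [poissonPMFReal]
        have h2 : (((1 : ℝ≥0) / 2 : ℝ≥0) : ℝ) = 1 / 2 := by norm_num
        rw [h2]
        rw [div_mul_eq_mul_div, mul_assoc, ← mul_pow]
        norm_num
        ring
    _ = ENNReal.ofReal (∑' n : ℕ, Real.exp (-(1 / 2)) * ((1 : ℝ) / (Nat.factorial n : ℝ))) :=
        (ENNReal.ofReal_tsum_of_nonneg (fun n => by positivity) hsummable).symm
    _ = ENNReal.ofReal (Real.exp (1 / 2)) := by
        congr 1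
        rw [tsum_mul_left]
        have h1 : ∑' n : ℕ, (1 : ℝ) / (Nat.factorial n : ℝ) = Real.exp 1 := by
          rw [Real.exp_eq_exp_ℝ, NormedSpace.exp_eq_tsum_div]
          norm_num
        rw [h1, ← Real.exp_add]
        norm_num

/-- If `Y ∼ Pois(1/2)` is independent of an i.i.d. sequence `η₁, η₂, …` of `Exp(λM)`
random variables with `λM ≥ 8`, then `P(∑_{i=1}^Y ηᵢ ≥ 1/4) ≤ 2·exp(−λM/32)`. -/
theorem poisson_sum_exponential_tail {Ω : Type*} [MeasureSpace Ω]
    [IsProbabilityMeasure (ℙ : Measure Ω)]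
    (lam M : ℝ) (hlM : 8 ≤ lam * M)
    (Y : Ω → ℕ) (hYmeas : Measurable Y)
    (hYdist : Measure.map Y ℙ = poissonMeasure (1 / 2))
    (η : ℕ → Ω → ℝ) (hmeas : ∀ i, Measurable (η i))
    (hdist : ∀ i, Measure.map (η i) ℙ = expMeasure (lam * M))
    (hindep : iIndepFun η ℙ)
    (hYindep : IndepFun Y (fun ω => fun i => η i ω) ℙ) :
    ℙ {ω | (1 / 4 : ℝ) ≤ ∑ i ∈ Finset.range (Y ω), η i ω} ≤
      ENNReal.ofReal (2 * Real.exp (-(lam * M) / 32)) := by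
  set c := lam * M with hc_def
  have hc : 0 < c := lt_of_lt_of_le (by norm_num) hlM
  set t := c / 2 with ht_def
  have ht : 0 < t := half_pos hc
  set e : ℕ → Ω → ℝ≥0∞ := fun i ω => ENNReal.ofReal (Real.exp (t * η i ω)) with he_def
  have he_meas : ∀ i, Measurable (e i) := fun i =>
    ENNReal.measurable_ofReal.comp (Real.measurable_exp.comp ((hmeas i).const_mul t))
  -- single exponential moment
  have hKe : ∀ i, ∫⁻ ω, e i ω = ENNReal.ofReal 2 := by
    intro i
    have hfm : Measurable fun x : ℝ => ENNReal.ofReal (Real.exp (t * x)) :=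
      ENNReal.measurable_ofReal.comp (Real.measurable_exp.comp (measurable_const_mul t))
    calc ∫⁻ ω, e i ω
        = ∫⁻ x, ENNReal.ofReal (Real.exp (t * x)) ∂(Measure.map (η i) ℙ) :=
          (lintegral_map hfm (hmeas i)).symm
      _ = ENNReal.ofReal 2 := by rw [hdist i]; exact exp_lintegral_expMeasure_half hc
  -- independence of the transformed variables
  have he_indep : iIndepFun e ℙ :=
    hindep.comp (fun _ (x : ℝ) => ENNReal.ofReal (Real.exp (t * x)))
      (fun _ => ENNReal.measurable_ofReal.comp (Real.measurable_exp.comp (measurable_const_mul t)))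
  -- product moments
  have hprod : ∀ n, ∫⁻ ω, ∏ i ∈ Finset.range n, e i ω = (ENNReal.ofReal 2) ^ n := by
    intro n
    induction n with
    | zero => simp
    | succ n ih =>
      have hind : IndepFun (fun ω => ∏ j ∈ Finset.range n, e j ω) (e n) ℙ := by
        have h0 := he_indep.indepFun_prod_range_succ he_meas n
        have heq : (∏ j ∈ Finset.range n, e j) = fun ω => ∏ j ∈ Finset.range n, e j ω :=
          funext fun ω => Finset.prod_apply ω (Finset.range n) e
        rwa [heq] at h0
      have hmul := lintegral_mul_eq_lintegral_mul_lintegral_of_indepFun''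
        (μ := (ℙ : Measure Ω)) (f := fun ω => ∏ j ∈ Finset.range n, e j ω) (g := e n)
        (Finset.measurable_prod _ fun i _ => he_meas i).aemeasurable
        (he_meas n).aemeasurable hind
      simp only [Finset.prod_range_succ]
      rw [hmul, ih, hKe n, pow_succ]
  -- measurability of the random sum
  have hSmeas : Measurable fun ω => ∑ i ∈ Finset.range (Y ω), η i ω := by
    have h1 : Measurable fun p : Ω × ℕ => ∑ i ∈ Finset.range p.2, η i p.1 :=
      measurable_from_prod_countable_left fun n => by
        simpa using Finset.measurable_sum (Finset.range n) fun i _ => hmeas i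
    exact h1.comp (measurable_id.prodMk hYmeas)
  set g : Ω → ℝ≥0∞ :=
    fun ω => ENNReal.ofReal (Real.exp (t * ∑ i ∈ Finset.range (Y ω), η i ω)) with hg_def
  have hg_meas : Measurable g :=
    ENNReal.measurable_ofReal.comp (Real.measurable_exp.comp (hSmeas.const_mul t))
  -- compute the exponential moment of the random sum
  have hg_int : ∫⁻ ω, g ω = ENNReal.ofReal (Real.exp (1 / 2)) := by
    have hg_eq : ∀ ω, g ω
        = ∑' n : ℕ, Set.indicator (Y ⁻¹' {n}) (fun ω => ∏ i ∈ Finset.range n, e i ω) ω := by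
      intro ω
      have hts : (∑' n : ℕ, Set.indicator (Y ⁻¹' {n})
          (fun ω => ∏ i ∈ Finset.range n, e i ω) ω)
          = Set.indicator (Y ⁻¹' {Y ω}) (fun ω => ∏ i ∈ Finset.range (Y ω), e i ω) ω :=
        tsum_eq_single (Y ω) (fun n hn =>
          Set.indicator_of_notMem
            (show ω ∉ Y ⁻¹' {n} from fun h => hn (Set.mem_singleton_iff.mp h).symm) _)
      rw [hts, Set.indicator_of_mem (show ω ∈ Y ⁻¹' {Y ω} from rfl)]
      simp only [hg_def, he_def]
      rw [Finset.mul_sum, Real.exp_sum,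
        ENNReal.ofReal_prod_of_nonneg (fun i _ => (Real.exp_pos _).le)]
    calc ∫⁻ ω, g ω
        = ∫⁻ ω, ∑' n : ℕ, Set.indicator (Y ⁻¹' {n})
            (fun ω => ∏ i ∈ Finset.range n, e i ω) ω := lintegral_congr hg_eq
      _ = ∑' n : ℕ, ∫⁻ ω, Set.indicator (Y ⁻¹' {n})
            (fun ω => ∏ i ∈ Finset.range n, e i ω) ω :=
          lintegral_tsum fun n =>
            ((Finset.measurable_prod _ fun i _ => he_meas i).indicator
              (hYmeas (measurableSet_singleton n))).aemeasurable
      _ = ∑' n : ℕ, (poissonPMF (1 / 2 : ℝ≥0) n) * (ENNReal.ofReal 2) ^ n := by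
          refine tsum_congr fun n => ?_
          have hsplit : ∀ ω, Set.indicator (Y ⁻¹' {n})
              (fun ω => ∏ i ∈ Finset.range n, e i ω) ω
              = Set.indicator ({n} : Set ℕ) (fun _ => (1 : ℝ≥0∞)) (Y ω)
                * ∏ i ∈ Finset.range n, e i ω := by
            intro ω
            by_cases h : Y ω = n <;> simp [Set.indicator, h]
          have hφ : Measurable fun k : ℕ =>
              Set.indicator ({n} : Set ℕ) (fun _ => (1 : ℝ≥0∞)) k := measurable_from_top
          have hF : Measurable fun v : ℕ → ℝ =>
              ∏ i ∈ Finset.range n, ENNReal.ofReal (Real.exp (t * v i)) :=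
            Finset.measurable_prod _ fun i _ =>
              ENNReal.measurable_ofReal.comp
                (Real.measurable_exp.comp (show Measurable fun v : ℕ → ℝ => t * v i by fun_prop))
          have hIndep2 : IndepFun
              (fun ω => Set.indicator ({n} : Set ℕ) (fun _ => (1 : ℝ≥0∞)) (Y ω))
              (fun ω => ∏ i ∈ Finset.range n, e i ω) ℙ := hYindep.comp hφ hF
          have hmul := lintegral_mul_eq_lintegral_mul_lintegral_of_indepFun''
            (μ := (ℙ : Measure Ω))
            (f := fun ω => Set.indicator ({n} : Set ℕ) (fun _ => (1 : ℝ≥0∞)) (Y ω))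
            (g := fun ω => ∏ i ∈ Finset.range n, e i ω)
            ((hφ.comp hYmeas).aemeasurable)
            ((Finset.measurable_prod _ fun i _ => he_meas i).aemeasurable) hIndep2
          rw [lintegral_congr hsplit, hmul, hprod n]
          congr 1
          rw [lintegral_indicator_const_comp hYmeas (measurableSet_singleton n) 1, one_mul]
          have hY : ℙ (Y ⁻¹' {n}) = poissonMeasure (1 / 2 : ℝ≥0) {n} := by
            rw [← hYdist, Measure.map_apply hYmeas (measurableSet_singleton n)]
          rw [hY, poissonMeasure_singleton]
          rfl
      _ = ENNReal.ofReal (Real.exp (1 / 2)) := poisson_pgf_half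
  -- Markov / Chernoff
  set ε : ℝ≥0∞ := ENNReal.ofReal (Real.exp (t * (1 / 4))) with hε_def
  have hε0 : ε ≠ 0 := by
    simp [hε_def, ENNReal.ofReal_eq_zero, not_le, Real.exp_pos]
  have hεtop : ε ≠ ⊤ := ENNReal.ofReal_ne_top
  have hmarkov := mul_meas_ge_le_lintegral₀ (μ := (ℙ : Measure Ω)) hg_meas.aemeasurable ε
  have hsubset : {ω | (1 / 4 : ℝ) ≤ ∑ i ∈ Finset.range (Y ω), η i ω} ⊆ {ω | ε ≤ g ω} := by
    intro ω hω
    have hω' : (1 / 4 : ℝ) ≤ ∑ i ∈ Finset.range (Y ω), η i ω := hω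
    exact ENNReal.ofReal_le_ofReal
      (Real.exp_le_exp.mpr (mul_le_mul_of_nonneg_left hω' ht.le))
  have hreal : Real.exp (1 / 2) / Real.exp (t * (1 / 4)) ≤ 2 * Real.exp (-c / 32) := by
    rw [← Real.exp_sub]
    have h1 : Real.exp (1 / 2 - t * (1 / 4)) ≤ Real.exp (-c / 32) :=
      Real.exp_le_exp.mpr (by rw [ht_def]; linarith)
    nlinarith [Real.exp_pos (-c / 32)]
  calc ℙ {ω | (1 / 4 : ℝ) ≤ ∑ i ∈ Finset.range (Y ω), η i ω}
      ≤ ℙ {ω | ε ≤ g ω} := measure_mono hsubset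
    _ ≤ ENNReal.ofReal (Real.exp (1 / 2)) / ε := by
        rw [ENNReal.le_div_iff_mul_le (Or.inl hε0) (Or.inl hεtop), mul_comm]
        rw [← hg_int]
        exact hmarkov
    _ = ENNReal.ofReal (Real.exp (1 / 2) / Real.exp (t * (1 / 4))) :=
        (ENNReal.ofReal_div_of_pos (Real.exp_pos _)).symm
    _ ≤ ENNReal.ofReal (2 * Real.exp (-c / 32)) := ENNReal.ofReal_le_ofReal hreal
end

section
/- Let 𝒯 be a Galton–Watson tree where the root has offspring distribution μ and all other vertices have offspring distribution μ̃, with d̃ := E_{D∼μ̃}[D] > 1, and suppose E_{N∼μ}[e^{cN}] < ∞ and E_{N∼μ̃}[e^{cN}] < ∞ for some c > 0. Let Z_s denote the number of vertices at generation s. Then there exists t > 0 such that sup_{s ≥ 1} E[exp(t · Z_s · d̃^{−s})] < ∞. -/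
open MeasureTheory ProbabilityTheory Real Finset
open scoped ENNReal

lemma gw_aux_exp_quad {y : ℝ} (hy : 0 ≤ y) : exp y ≤ 1 + y + y ^ 2 * exp y := by
  have h1 : 1 - y ≤ exp (-y) := by linarith [Real.add_one_le_exp (-y)]
  have hpos : 0 < exp y := Real.exp_pos y
  have h2 : (1 - y) * exp y ≤ 1 := by
    have := mul_le_mul_of_nonneg_right h1 hpos.le
    rwa [Real.exp_neg, inv_mul_cancel₀ hpos.ne'] at this
  have h3 : exp y - 1 ≤ y * exp y := by nlinarith
  nlinarith [Real.one_le_exp hy]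

lemma gw_aux_pointwise {c u x : ℝ} (hc : 0 < c) (hu : 0 ≤ u) (huc : u ≤ c / 2)
    (hx : 0 ≤ x) : exp (u * x) ≤ 1 + u * x + 16 / c ^ 2 * u ^ 2 * exp (c * x) := by
  have hux : 0 ≤ u * x := mul_nonneg hu hx
  have h1 := gw_aux_exp_quad hux
  have h2 : exp (u * x) ≤ exp (c * x / 2) := Real.exp_le_exp.2 (by nlinarith)
  have h3 : c * x / 4 ≤ exp (c * x / 4) := by linarith [Real.add_one_le_exp (c * x / 4)]
  have h4 : (c * x / 4) ^ 2 ≤ exp (c * x / 2) := by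
    have := mul_le_mul h3 h3 (by positivity) (Real.exp_nonneg _)
    calc (c * x / 4) ^ 2 = (c * x / 4) * (c * x / 4) := sq (c * x / 4)
      _ ≤ exp (c * x / 4) * exp (c * x / 4) := this
      _ = exp (c * x / 2) := by rw [← Real.exp_add]; ring_nf
  have h5 : x ^ 2 ≤ 16 / c ^ 2 * exp (c * x / 2) := by
    rw [div_mul_eq_mul_div, le_div_iff₀ (by positivity)]
    nlinarith
  have h6 : exp (c * x / 2) * exp (c * x / 2) = exp (c * x) := by
    rw [← Real.exp_add]; ring_nf
  have h7 : (u * x) ^ 2 * exp (u * x) ≤ 16 / c ^ 2 * u ^ 2 * exp (c * x) := by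
    calc (u * x) ^ 2 * exp (u * x) ≤ (u * x) ^ 2 * exp (c * x / 2) := by
          exact mul_le_mul_of_nonneg_left h2 (by positivity)
      _ = u ^ 2 * (x ^ 2 * exp (c * x / 2)) := by ring
      _ ≤ u ^ 2 * (16 / c ^ 2 * exp (c * x / 2) * exp (c * x / 2)) := by
          refine mul_le_mul_of_nonneg_left ?_ (by positivity)
          exact mul_le_mul_of_nonneg_right h5 (Real.exp_nonneg _)
      _ = 16 / c ^ 2 * u ^ 2 * exp (c * x) := by rw [mul_assoc, h6]; ring
  linarith

lemma gw_aux_mgf (μt : Measure ℕ) [IsProbabilityMeasure μt] {c : ℝ} (hc : 0 < c)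
    (hμtexp : Integrable (fun n : ℕ => Real.exp (c * n)) μt) {u : ℝ}
    (hu : 0 ≤ u) (huc : u ≤ c / 2) :
    ∫ n, exp (u * n) ∂μt ≤
      exp (u * (∫ n, (n : ℝ) ∂μt) + (16 / c ^ 2 * ∫ n, exp (c * n) ∂μt) * u ^ 2) := by
  have hmN : ∀ {X : Type} [MeasurableSpace X] (g : ℕ → X), Measurable g := by
    intro X _ g; exact Measurable.of_discrete
  have hexpu : Integrable (fun n : ℕ => exp (u * n)) μt := by
    refine hμtexp.mono' (hmN _).aestronglyMeasurable (ae_of_all _ fun n => ?_)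
    rw [norm_of_nonneg (exp_nonneg _)]
    exact exp_le_exp.2 (mul_le_mul_of_nonneg_right (by linarith) (Nat.cast_nonneg n))
  have hn : Integrable (fun n : ℕ => (n : ℝ)) μt := by
    refine (hμtexp.const_mul c⁻¹).mono' (hmN _).aestronglyMeasurable (ae_of_all _ fun n => ?_)
    rw [norm_of_nonneg (Nat.cast_nonneg n)]
    have h1 : c * n ≤ exp (c * n) := by linarith [Real.add_one_le_exp (c * (n : ℝ))]
    rw [← mul_le_mul_iff_of_pos_left hc, ← mul_assoc, mul_inv_cancel₀ hc.ne', one_mul]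
    exact h1
  have hrhs : Integrable
      (fun n : ℕ => 1 + u * n + 16 / c ^ 2 * u ^ 2 * exp (c * n)) μt :=
    ((integrable_const 1).add (hn.const_mul u)).add (hμtexp.const_mul _)
  have hle : ∫ n, exp (u * n) ∂μt ≤
      ∫ n, (1 + u * n + 16 / c ^ 2 * u ^ 2 * exp (c * n)) ∂μt := by
    refine integral_mono hexpu hrhs fun n => ?_
    exact gw_aux_pointwise hc hu huc (Nat.cast_nonneg n)
  have heq : ∫ n, (1 + u * n + 16 / c ^ 2 * u ^ 2 * exp (c * n)) ∂μt
      = 1 + u * (∫ n, (n : ℝ) ∂μt) + 16 / c ^ 2 * u ^ 2 * ∫ n, exp (c * n) ∂μt := by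
    have hA' : Integrable (fun n : ℕ => 1 + u * (n : ℝ)) μt :=
      (integrable_const 1).add (hn.const_mul u)
    have hB' : Integrable (fun n : ℕ => 16 / c ^ 2 * u ^ 2 * exp (c * n)) μt :=
      hμtexp.const_mul _
    rw [integral_add hA' hB', integral_add (integrable_const 1) (hn.const_mul u),
      integral_const, integral_const_mul, integral_const_mul]
    simp [measure_univ]
  refine le_trans hle ?_
  rw [heq]
  have := Real.add_one_le_exp (u * (∫ n, (n : ℝ) ∂μt) + (16 / c ^ 2 * ∫ n, exp (c * n) ∂μt) * u ^ 2)
  nlinarith []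

lemma gw_aux_le2t {t q p : ℝ} (ht : 0 < t) (hq : 1 ≤ q) (hp : 1 ≤ p) :
    t * (q + 1) / (q * p) ≤ 2 * t := by
  have hq0 : 0 < q := lt_of_lt_of_le one_pos hq
  have hp0 : 0 < p := lt_of_lt_of_le one_pos hp
  rw [div_le_iff₀ (by positivity)]
  have A : t * q * 1 ≤ t * q * p := by
    refine mul_le_mul_of_nonneg_left hp (by positivity)
  have B : t * 1 ≤ t * q := mul_le_mul_of_nonneg_left hq ht.le
  nlinarith

lemma gw_aux_tle {t q p : ℝ} (ht : 0 < t) (hq : 1 ≤ q) (hp : 1 ≤ p) :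
    t * p⁻¹ ≤ t * (q + 1) / (q * p) := by
  have hq0 : 0 < q := lt_of_lt_of_le one_pos hq
  have hp0 : 0 < p := lt_of_lt_of_le one_pos hp
  rw [← div_eq_mul_inv, div_le_div_iff₀ hp0 (by positivity)]
  have A : 0 ≤ t * p := by positivity
  nlinarith

lemma gw_aux_step {K t dt q p : ℝ} (hK : 0 < K) (ht : 0 < t) (hdt : 1 < dt)
    (hq : 1 ≤ q) (hp : 1 ≤ p) (hpq : p = q * dt) (htK : 4 * K * t ≤ dt - 1) :
    t * (p + 1) / (p * (p * dt)) * dt + K * (t * (p + 1) / (p * (p * dt))) ^ 2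
      ≤ t * (q + 1) / (q * p) := by
  have hq0 : 0 < q := lt_of_lt_of_le one_pos hq
  have hp0 : 0 < p := lt_of_lt_of_le one_pos hp
  have hdt0 : 0 < dt := lt_trans one_pos hdt
  have hpne : p ≠ 0 := ne_of_gt hp0
  have hqne : q ≠ 0 := ne_of_gt hq0
  have hdtne : dt ≠ 0 := ne_of_gt hdt0
  have e1 : t * (p + 1) / (p * (p * dt)) * dt = t * (p + 1) / p ^ 2 := by
    field_simp
  have e2 : K * (t * (p + 1) / (p * (p * dt))) ^ 2
      = K * t ^ 2 * (p + 1) ^ 2 / (p ^ 4 * dt ^ 2) := by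
    field_simp
  have e3 : K * t ^ 2 * (p + 1) ^ 2 / (p ^ 4 * dt ^ 2) ≤ t * (dt - 1) / p ^ 2 := by
    rw [div_le_div_iff₀ (by positivity) (by positivity)]
    have h4 : (p + 1) ^ 2 ≤ 4 * p ^ 2 := by nlinarith
    have hKt2 : 0 ≤ K * t ^ 2 := by positivity
    have c1 : K * t ^ 2 * (p + 1) ^ 2 * p ^ 2 ≤ K * t ^ 2 * (4 * p ^ 2) * p ^ 2 :=
      mul_le_mul_of_nonneg_right (mul_le_mul_of_nonneg_left h4 hKt2) (sq_nonneg p)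
    have c2 : K * t ^ 2 * (4 * p ^ 2) * p ^ 2 = 4 * K * t * (t * p ^ 4) := by ring
    have c3 : 4 * K * t * (t * p ^ 4) ≤ (dt - 1) * (t * p ^ 4) :=
      mul_le_mul_of_nonneg_right htK (by positivity)
    have hdt2 : 1 ≤ dt ^ 2 := by nlinarith
    have c4 : (dt - 1) * (t * p ^ 4) ≤ t * (dt - 1) * (p ^ 4 * dt ^ 2) := by
      nlinarith [mul_nonneg (mul_nonneg (mul_nonneg (by linarith : (0:ℝ) ≤ dt - 1) ht.le)
        (pow_nonneg hp0.le 4)) (sub_nonneg.mpr hdt2)]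
    linarith
  have e4 : t * (p + 1) / p ^ 2 + t * (dt - 1) / p ^ 2 ≤ t * (q + 1) / (q * p) := by
    apply le_of_eq
    rw [← add_div, hpq]
    field_simp
    ring
  rw [e1, e2]
  linarith

open ProbabilityTheory Finset
open scoped ENNReal


/-- Exponential moment bound for a Galton–Watson branching process whose root has
offspring distribution `μ` and all other vertices offspring distribution `μ̃`, both with
exponential moments, and with `d̃ = E_{μ̃}[D] > 1`: there is `t > 0` with
`sup_{s≥1} E[exp(t·Z_s·d̃^{−s})] < ∞`. -/
theorem gw_generation_exponential_moment {Ω : Type*} [MeasureSpace Ω]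
    [IsProbabilityMeasure (ℙ : Measure Ω)]
    (μ μt : Measure ℕ) [IsProbabilityMeasure μ] [IsProbabilityMeasure μt]
    (c : ℝ) (hc : 0 < c)
    (hμexp : Integrable (fun n : ℕ => Real.exp (c * n)) μ)
    (hμtexp : Integrable (fun n : ℕ => Real.exp (c * n)) μt)
    (dt : ℝ) (hdt : dt = ∫ n, (n : ℝ) ∂μt) (hdt1 : 1 < dt)
    -- the offspring variables: `ξ₀` for the root, `ξ s i` for the `i`-th vertex of
    -- generation `s ≥ 1`, all jointly independent with the stated distributions
    (ξ₀ : Ω → ℕ) (ξ : ℕ → ℕ → Ω → ℕ)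
    (hξ₀meas : Measurable ξ₀) (hξmeas : ∀ s i, Measurable (ξ s i))
    (hξ₀dist : Measure.map ξ₀ ℙ = μ) (hξdist : ∀ s i, Measure.map (ξ s i) ℙ = μt)
    (hindep : iIndepFun
      (fun (j : Option (ℕ × ℕ)) => Option.elim j ξ₀ (fun p => ξ p.1 p.2)) ℙ)
    -- the generation sizes
    (Z : ℕ → Ω → ℕ) (hZ0 : ∀ ω, Z 0 ω = 1) (hZ1 : ∀ ω, Z 1 ω = ξ₀ ω)
    (hZ : ∀ s, 1 ≤ s → ∀ ω, Z (s + 1) ω = ∑ i ∈ Finset.range (Z s ω), ξ s i ω) :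
    ∃ t > (0 : ℝ), ∃ C : ℝ, ∀ s, 1 ≤ s →
      Integrable (fun ω => Real.exp (t * (Z s ω : ℝ) * (dt ^ s)⁻¹)) ℙ ∧
      ∫ ω, Real.exp (t * (Z s ω : ℝ) * (dt ^ s)⁻¹) ∂ℙ ≤ C := by
  have hmN : ∀ {X : Type} [MeasurableSpace X] (g : ℕ → X), Measurable g := by
    intro X _ g; exact Measurable.of_discrete
  -- basic positivity
  have hdt0 : (0:ℝ) < dt := lt_trans one_pos hdt1
  have hdt1' : (1:ℝ) ≤ dt := hdt1.le
  have hpow1 : ∀ s : ℕ, (1:ℝ) ≤ dt ^ s := fun s => one_le_pow₀ hdt1'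
  have hpow0 : ∀ s : ℕ, (0:ℝ) < dt ^ s := fun s => lt_of_lt_of_le one_pos (hpow1 s)
  -- the σ-algebras
  set F : Option (ℕ × ℕ) → Ω → ℕ := fun j => Option.elim j ξ₀ (fun p => ξ p.1 p.2) with hF
  have hFmeas : ∀ j, Measurable (F j) := by rintro (_ | ⟨r, i⟩); exacts [hξ₀meas, hξmeas r i]
  set mm : Option (ℕ × ℕ) → MeasurableSpace Ω :=
    fun j => MeasurableSpace.comap (F j) inferInstance with hmm
  have hmm_le : ∀ j, mm j ≤ (inferInstance : MeasurableSpace Ω) :=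
    fun j => measurable_iff_comap_le.mp (hFmeas j)
  have hiIndep : iIndep mm ℙ := hindep.iIndep
  set S : ℕ → Set (Option (ℕ × ℕ)) :=
    fun s => insert none {j | ∃ r i, r < s ∧ j = some (r, i)} with hSdef
  set G : ℕ → MeasurableSpace Ω := fun s => ⨆ j ∈ S s, mm j with hGdef
  have hmemS : ∀ r i s : ℕ, r < s → some (r, i) ∈ S s := fun r i s h =>
    Set.mem_insert_iff.mpr (Or.inr (Set.mem_setOf.mpr ⟨r, i, h, rfl⟩))
  have hS_mono : ∀ {a b : ℕ}, a ≤ b → S a ⊆ S b := by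
    intro a b hab j hj
    rcases hj with hj | ⟨r, i, hr, rfl⟩
    · exact Set.mem_insert_iff.mpr (Or.inl hj)
    · exact Set.mem_insert_iff.mpr (Or.inr ⟨r, i, lt_of_lt_of_le hr hab, rfl⟩)
  have hG_le : ∀ s, G s ≤ (inferInstance : MeasurableSpace Ω) :=
    fun s => iSup₂_le fun j _ => hmm_le j
  have hG_mono : ∀ {a b : ℕ}, a ≤ b → G a ≤ G b := by
    intro a b hab
    exact biSup_mono (hS_mono hab)
  -- measurability of Z
  have hZmeasG : ∀ s, 1 ≤ s → Measurable[G s] (Z s) := by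
    intro s hs
    induction s, hs using Nat.le_induction with
    | base =>
      have h1 : Z 1 = F none := funext hZ1
      rw [h1]
      exact Measurable.of_comap_le (le_biSup mm (Set.mem_insert _ _))
    | succ s hs IH =>
      have hZs : Measurable[G (s + 1)] (Z s) := IH.mono (hG_mono (Nat.le_succ s)) le_rfl
      have hξi : ∀ i, Measurable[G (s + 1)] (ξ s i) := fun i =>
        Measurable.of_comap_le (le_biSup mm (hmemS s i (s + 1) (Nat.lt_succ_self s)))
      have h1 : Z (s + 1) = (fun p : (ℕ → ℕ) × ℕ => ∑ i ∈ Finset.range p.2, p.1 i) ∘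
          (fun ω => ((fun i => ξ s i ω), Z s ω)) := funext fun ω => hZ s hs ω
      rw [h1]
      have houter : Measurable (fun p : (ℕ → ℕ) × ℕ => ∑ i ∈ Finset.range p.2, p.1 i) :=
        measurable_from_prod_countable_left fun k =>
          Finset.measurable_sum (Finset.range k) (fun i _ => measurable_pi_apply i)
      have hpi : Measurable[G (s + 1)] (fun ω i => ξ s i ω) :=
        (@measurable_pi_iff Ω ℕ (fun _ => ℕ) (G (s + 1)) _ _).mpr hξi
      have hinner : Measurable[G (s + 1)] (fun ω => ((fun i => ξ s i ω), Z s ω)) :=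
        Measurable.prodMk hpi hZs
      exact houter.comp hinner
  have hZmeas : ∀ s, 1 ≤ s → Measurable (Z s) := fun s hs =>
    (hZmeasG s hs).mono (hG_le s) le_rfl
  -- distribution facts
  set φ : ℝ → ℝ≥0∞ := fun u => ∫⁻ n, ENNReal.ofReal (Real.exp (u * n)) ∂μt with hφdef
  have hφi : ∀ (s i : ℕ) (u : ℝ),
      ∫⁻ ω, ENNReal.ofReal (Real.exp (u * ξ s i ω)) ∂ℙ = φ u := by
    intro s i u
    have hrfl : φ u = ∫⁻ n, ENNReal.ofReal (Real.exp (u * n)) ∂μt := rfl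
    rw [hrfl, ← hξdist s i, lintegral_map (hmN _) (hξmeas s i)]
  -- the level sets of Z s
  set A : ℕ → ℕ → Set Ω := fun s k => Z s ⁻¹' {k} with hAdef
  have hAmeasG : ∀ s, 1 ≤ s → ∀ k, MeasurableSet[G s] (A s k) := fun s hs k =>
    hZmeasG s hs (measurableSet_singleton k)
  have hAmeas : ∀ s, 1 ≤ s → ∀ k, MeasurableSet (A s k) := fun s hs k =>
    hG_le s _ (hAmeasG s hs k)
  -- the core independence computation
  have hcore : ∀ s, 1 ≤ s → ∀ (u : ℝ) (k : ℕ),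
      ∫⁻ ω in A s k, ENNReal.ofReal (Real.exp (u * ∑ i ∈ Finset.range k, (ξ s i ω : ℝ))) ∂ℙ
        = ℙ (A s k) * (φ u) ^ k := by
    intro s hs u k
    have key : ∀ m : ℕ,
        ∫⁻ ω, (A s k).indicator (fun _ => (1 : ℝ≥0∞)) ω *
          ∏ i ∈ Finset.range m, ENNReal.ofReal (Real.exp (u * ξ s i ω)) ∂ℙ
          = ℙ (A s k) * (φ u) ^ m := by
      intro m
      induction m with
      | zero =>
        simp only [Finset.range_zero, Finset.prod_empty, mul_one, pow_zero]
        rw [lintegral_indicator (hAmeas s hs k)]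
        simp
      | succ m IH =>
        set T : Set (Option (ℕ × ℕ)) := S s ∪ {j | ∃ i, i < m ∧ j = some (s, i)} with hTdef
        have hTle : (⨆ j ∈ T, mm j) ≤ (inferInstance : MeasurableSpace Ω) :=
          iSup₂_le fun j _ => hmm_le j
        have hdisj : Disjoint T {some (s, m)} := by
          rw [Set.disjoint_singleton_right]
          rintro ((h | ⟨r, i, hr, hji⟩) | ⟨i, hi, hji⟩)
          · exact Option.some_ne_none _ h
          · rw [Option.some_inj, Prod.mk.injEq] at hji
            exact absurd hji.1.symm (Nat.ne_of_lt hr)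
          · rw [Option.some_inj, Prod.mk.injEq] at hji
            exact absurd hji.2.symm (Nat.ne_of_lt hi)
        have hindep2 : Indep (⨆ j ∈ T, mm j) (mm (some (s, m))) ℙ := by
          have h := ProbabilityTheory.indep_iSup_of_disjoint hmm_le hiIndep hdisj
          simpa using h
        have hAT : MeasurableSet[⨆ j ∈ T, mm j] (A s k) :=
          (MeasurableSpace.le_def.mp (biSup_mono Set.subset_union_left)) _ (hAmeasG s hs k)
        have hfmeas : Measurable[⨆ j ∈ T, mm j] (fun ω =>
            (A s k).indicator (fun _ => (1 : ℝ≥0∞)) ω *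
              ∏ i ∈ Finset.range m, ENNReal.ofReal (Real.exp (u * ξ s i ω))) := by
          refine Measurable.mul ?_ ?_
          · exact measurable_const.indicator hAT
          · refine Finset.measurable_prod _ fun i hi => ?_
            have hmem : some (s, i) ∈ T :=
              Set.mem_union_right _ (Set.mem_setOf.mpr ⟨i, Finset.mem_range.mp hi, rfl⟩)
            have hmi : Measurable[⨆ j ∈ T, mm j] (ξ s i) :=
              Measurable.of_comap_le (le_biSup mm hmem)
            exact (hmN (fun n : ℕ => ENNReal.ofReal (Real.exp (u * n)))).comp hmi
        have hgmeas : Measurable[mm (some (s, m))] (fun ω =>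
            ENNReal.ofReal (Real.exp (u * ξ s m ω))) :=
          (hmN (fun n : ℕ => ENNReal.ofReal (Real.exp (u * n)))).comp
            (Measurable.of_comap_le le_rfl)
        calc ∫⁻ ω, (A s k).indicator (fun _ => (1 : ℝ≥0∞)) ω *
              ∏ i ∈ Finset.range (m + 1), ENNReal.ofReal (Real.exp (u * ξ s i ω)) ∂ℙ
            = ∫⁻ ω, ((A s k).indicator (fun _ => (1 : ℝ≥0∞)) ω *
                ∏ i ∈ Finset.range m, ENNReal.ofReal (Real.exp (u * ξ s i ω))) *
                ENNReal.ofReal (Real.exp (u * ξ s m ω)) ∂ℙ := by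
              congr 1; funext ω; rw [Finset.prod_range_succ, mul_assoc]
          _ = (∫⁻ ω, (A s k).indicator (fun _ => (1 : ℝ≥0∞)) ω *
                ∏ i ∈ Finset.range m, ENNReal.ofReal (Real.exp (u * ξ s i ω)) ∂ℙ) *
                ∫⁻ ω, ENNReal.ofReal (Real.exp (u * ξ s m ω)) ∂ℙ :=
              lintegral_mul_eq_lintegral_mul_lintegral_of_independent_measurableSpace
                hTle (hmm_le _) hindep2 hfmeas hgmeas
          _ = ℙ (A s k) * (φ u) ^ m * φ u := by rw [IH, hφi s m u]
          _ = ℙ (A s k) * (φ u) ^ (m + 1) := by rw [mul_assoc, ← pow_succ]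
    have hpt : ∀ ω, (A s k).indicator (fun _ => (1 : ℝ≥0∞)) ω *
        ∏ i ∈ Finset.range k, ENNReal.ofReal (Real.exp (u * ξ s i ω))
        = (A s k).indicator (fun ω =>
            ENNReal.ofReal (Real.exp (u * ∑ i ∈ Finset.range k, (ξ s i ω : ℝ)))) ω := by
      intro ω
      by_cases hω : ω ∈ A s k
      · rw [Set.indicator_of_mem hω, Set.indicator_of_mem hω, one_mul, Finset.mul_sum,
          Real.exp_sum, ENNReal.ofReal_prod_of_nonneg (fun i _ => Real.exp_nonneg _)]
      · rw [Set.indicator_of_notMem hω, Set.indicator_of_notMem hω, zero_mul]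
    rw [← lintegral_indicator (hAmeas s hs k), ← lintegral_congr hpt, key k]
  -- decomposition of generation s+1 over the level sets of Z s
  have hdec : ∀ s, 1 ≤ s → ∀ u : ℝ,
      ∫⁻ ω, ENNReal.ofReal (Real.exp (u * Z (s + 1) ω)) ∂ℙ
        = ∑' k, ∫⁻ ω in A s k,
            ENNReal.ofReal (Real.exp (u * ∑ i ∈ Finset.range k, (ξ s i ω : ℝ))) ∂ℙ := by
    intro s hs u
    have hU : ⋃ k, A s k = Set.univ := by
      ext ω; simp [hAdef]
    have hpd : Pairwise (Function.onFun Disjoint (A s)) := by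
      intro k l hkl
      exact Set.disjoint_left.mpr fun ω h1 h2 => hkl ((Set.mem_preimage.mp h1).symm.trans h2)
    rw [← setLIntegral_univ, ← hU, lintegral_iUnion (hAmeas s hs) hpd]
    refine tsum_congr fun k => ?_
    refine setLIntegral_congr_fun (hAmeas s hs k) (fun ω hω => ?_)
    have hωk : Z s ω = k := hω
    rw [hZ s hs ω, hωk]
    push_cast
    rfl
  -- representation of the mgf of Z s via the level sets
  have hrep : ∀ s, 1 ≤ s → ∀ v : ℝ,
      ∫⁻ ω, ENNReal.ofReal (Real.exp (v * Z s ω)) ∂ℙ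
        = ∑' k : ℕ, ℙ (A s k) * ENNReal.ofReal (Real.exp (v * k)) := by
    intro s hs v
    have h1 : ∫⁻ ω, ENNReal.ofReal (Real.exp (v * Z s ω)) ∂ℙ
        = ∫⁻ n, ENNReal.ofReal (Real.exp (v * n)) ∂(Measure.map (Z s) ℙ) :=
      (lintegral_map (f := fun n : ℕ => ENNReal.ofReal (Real.exp (v * (n : ℝ))))
        (hmN _) (hZmeas s hs)).symm
    rw [h1, lintegral_countable' _]
    refine tsum_congr fun k => ?_
    rw [Measure.map_apply (hZmeas s hs) (measurableSet_singleton k), mul_comm]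
  -- mgf bound for the offspring distribution
  set K : ℝ := 16 / c ^ 2 * ∫ n, Real.exp (c * n) ∂μt with hKdef
  have hKpos : 0 < K := by
    have h1 : (1 : ℝ) ≤ ∫ n, Real.exp (c * n) ∂μt := by
      have h2 : ∫ n, (1 : ℝ) ∂μt = 1 := by simp
      rw [← h2]
      refine integral_mono (integrable_const 1) hμtexp fun n => ?_
      exact Real.one_le_exp (by positivity)
    rw [hKdef]; positivity
  have hφle : ∀ u : ℝ, 0 ≤ u → u ≤ c / 2 →
      φ u ≤ ENNReal.ofReal (Real.exp (u * dt + K * u ^ 2)) := by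
    intro u h0 h1
    have hint : Integrable (fun n : ℕ => Real.exp (u * n)) μt := by
      refine hμtexp.mono' (hmN _).aestronglyMeasurable (ae_of_all _ fun n => ?_)
      rw [Real.norm_of_nonneg (Real.exp_nonneg _)]
      exact Real.exp_le_exp.2 (mul_le_mul_of_nonneg_right (by linarith) (Nat.cast_nonneg n))
    have hrfl : φ u = ∫⁻ n, ENNReal.ofReal (Real.exp (u * n)) ∂μt := rfl
    rw [hrfl, ← ofReal_integral_eq_lintegral_ofReal hint (ae_of_all _ fun n => Real.exp_nonneg _)]
    refine ENNReal.ofReal_le_ofReal ?_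
    have := gw_aux_mgf μt hc hμtexp h0 h1
    rw [hdt, hKdef]
    convert this using 3
  -- the one-step inequality
  have hstep : ∀ s, 1 ≤ s → ∀ u : ℝ, 0 ≤ u → u ≤ c / 2 →
      ∫⁻ ω, ENNReal.ofReal (Real.exp (u * Z (s + 1) ω)) ∂ℙ
        ≤ ∫⁻ ω, ENNReal.ofReal (Real.exp ((u * dt + K * u ^ 2) * Z s ω)) ∂ℙ := by
    intro s hs u h0 h1
    rw [hdec s hs u, hrep s hs (u * dt + K * u ^ 2)]
    refine ENNReal.tsum_le_tsum fun k => ?_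
    rw [hcore s hs u k]
    refine mul_le_mul_right ?_ _
    calc (φ u) ^ k ≤ (ENNReal.ofReal (Real.exp (u * dt + K * u ^ 2))) ^ k :=
          pow_le_pow_left' (hφle u h0 h1) k
      _ = ENNReal.ofReal (Real.exp ((u * dt + K * u ^ 2) * k)) := by
          rw [← ENNReal.ofReal_pow (Real.exp_nonneg _), ← Real.exp_nat_mul, mul_comm (k : ℝ)]
  -- monotonicity in the exponent
  have hmono : ∀ s : ℕ, ∀ v v' : ℝ, v ≤ v' →
      ∫⁻ ω, ENNReal.ofReal (Real.exp (v * Z s ω)) ∂ℙ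
        ≤ ∫⁻ ω, ENNReal.ofReal (Real.exp (v' * Z s ω)) ∂ℙ := by
    intro s v v' hvv'
    refine lintegral_mono fun ω => ENNReal.ofReal_le_ofReal (Real.exp_le_exp.2 ?_)
    exact mul_le_mul_of_nonneg_right hvv' (Nat.cast_nonneg _)
  -- choice of constants
  set t : ℝ := min (c / 4) ((dt - 1) / (4 * K)) with htdef
  have hdtsub : (0:ℝ) < dt - 1 := by linarith
  have ht0 : 0 < t := lt_min (by positivity) (by positivity)
  have htc4 : t ≤ c / 4 := min_le_left _ _
  have htK : 4 * K * t ≤ dt - 1 := by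
    have h : t ≤ (dt - 1) / (4 * K) := min_le_right _ _
    rw [le_div_iff₀ (by positivity)] at h
    linarith
  set us : ℕ → ℝ := fun s => t * (dt ^ (s - 1) + 1) / (dt ^ (s - 1) * dt ^ s) with husdef
  have hus_eq : ∀ s : ℕ, us s = t * (dt ^ (s - 1) + 1) / (dt ^ (s - 1) * dt ^ s) :=
    fun s => rfl
  have hus_nonneg : ∀ s, 0 ≤ us s := by
    intro s
    rw [hus_eq]
    have hq0 := hpow0 (s - 1); have hp0 := hpow0 s
    exact div_nonneg (by nlinarith) (by nlinarith)
  have hus_le : ∀ s, us s ≤ 2 * t := by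
    intro s
    rw [hus_eq]
    exact gw_aux_le2t ht0 (hpow1 (s - 1)) (hpow1 s)
  have hus_c2 : ∀ s, us s ≤ c / 2 := fun s => le_trans (hus_le s) (by linarith)
  have ht_le : ∀ s : ℕ, t * (dt ^ s)⁻¹ ≤ us s := by
    intro s
    rw [hus_eq]
    exact gw_aux_tle ht0 (hpow1 (s - 1)) (hpow1 s)
  have hstep_ineq : ∀ s, 1 ≤ s → us (s + 1) * dt + K * us (s + 1) ^ 2 ≤ us s := by
    intro s hs
    have hs1 : s - 1 + 1 = s := Nat.succ_pred_eq_of_pos hs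
    have hpq : dt ^ s = dt ^ (s - 1) * dt := by rw [← pow_succ, hs1]
    have h1 : us (s + 1) = t * (dt ^ s + 1) / (dt ^ s * (dt ^ s * dt)) := by
      rw [hus_eq]
      rw [Nat.add_sub_cancel, pow_succ]
    rw [h1, hus_eq]
    exact gw_aux_step hKpos ht0 hdt1 (hpow1 (s - 1)) (hpow1 s) hpq htK
  -- the uniform bound constant
  set Cμ : ℝ := ∫ n, Real.exp (c * n) ∂μ with hCdef
  have hCμ0 : 0 ≤ Cμ := integral_nonneg fun n => Real.exp_nonneg _
  -- main induction
  have hmain : ∀ s, 1 ≤ s →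
      ∫⁻ ω, ENNReal.ofReal (Real.exp (us s * Z s ω)) ∂ℙ ≤ ENNReal.ofReal Cμ := by
    intro s hs
    induction s, hs using Nat.le_induction with
    | base =>
      have h1 : ∫⁻ ω, ENNReal.ofReal (Real.exp (us 1 * Z 1 ω)) ∂ℙ
          = ∫⁻ n, ENNReal.ofReal (Real.exp (us 1 * n)) ∂μ := by
        rw [← hξ₀dist,
          lintegral_map (f := fun n : ℕ => ENNReal.ofReal (Real.exp (us 1 * (n : ℝ))))
            (hmN _) hξ₀meas]
        refine lintegral_congr fun ω => ?_
        rw [hZ1]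
      have hus1c : us 1 ≤ c := le_trans (hus_le 1) (by linarith)
      rw [h1]
      calc ∫⁻ n, ENNReal.ofReal (Real.exp (us 1 * n)) ∂μ
          ≤ ∫⁻ n, ENNReal.ofReal (Real.exp (c * n)) ∂μ :=
            lintegral_mono fun n => ENNReal.ofReal_le_ofReal (Real.exp_le_exp.2
              (mul_le_mul_of_nonneg_right hus1c (Nat.cast_nonneg n)))
        _ = ENNReal.ofReal Cμ :=
            (ofReal_integral_eq_lintegral_ofReal hμexp
              (ae_of_all _ fun n => Real.exp_nonneg _)).symm
    | succ s hs IH =>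
      calc ∫⁻ ω, ENNReal.ofReal (Real.exp (us (s + 1) * Z (s + 1) ω)) ∂ℙ
          ≤ ∫⁻ ω, ENNReal.ofReal
              (Real.exp ((us (s + 1) * dt + K * us (s + 1) ^ 2) * Z s ω)) ∂ℙ :=
            hstep s hs (us (s + 1)) (hus_nonneg _) (hus_c2 _)
        _ ≤ ∫⁻ ω, ENNReal.ofReal (Real.exp (us s * Z s ω)) ∂ℙ :=
            hmono s _ _ (hstep_ineq s hs)
        _ ≤ ENNReal.ofReal Cμ := IH
  -- conclusion
  refine ⟨t, ht0, Cμ, fun s hs => ?_⟩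
  have hble : ∫⁻ ω, ENNReal.ofReal (Real.exp (t * (Z s ω : ℝ) * (dt ^ s)⁻¹)) ∂ℙ
      ≤ ENNReal.ofReal Cμ := by
    refine le_trans (lintegral_mono fun ω =>
      ENNReal.ofReal_le_ofReal (Real.exp_le_exp.2 ?_)) (hmain s hs)
    have h1 : t * (Z s ω : ℝ) * (dt ^ s)⁻¹ = (t * (dt ^ s)⁻¹) * (Z s ω : ℝ) := by ring
    rw [h1]
    exact mul_le_mul_of_nonneg_right (ht_le s) (Nat.cast_nonneg _)
  have hmeasf : Measurable fun ω => Real.exp (t * (Z s ω : ℝ) * (dt ^ s)⁻¹) := by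
    have h1 : Measurable fun ω => (Z s ω : ℝ) :=
      (hmN (fun n : ℕ => (n : ℝ))).comp (hZmeas s hs)
    exact Real.measurable_exp.comp ((h1.const_mul t).mul_const _)
  have hnn : ∀ ω : Ω, 0 ≤ Real.exp (t * (Z s ω : ℝ) * (dt ^ s)⁻¹) :=
    fun ω => Real.exp_nonneg _
  constructor
  · refine ⟨hmeasf.aestronglyMeasurable, ?_⟩
    rw [hasFiniteIntegral_iff_ofReal (ae_of_all _ hnn)]
    exact lt_of_le_of_lt hble ENNReal.ofReal_lt_top
  · rw [integral_eq_lintegral_of_nonneg_ae (ae_of_all _ hnn) hmeasf.aestronglyMeasurable]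
    exact ENNReal.toReal_le_of_le_ofReal hCμ0 hble
end
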